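/- Let A ∈ GL_n(ℤ), λ an eigenvalue with |λ| = 1, and v₁, v₂ ∈ ℂ^n with A v₁ = λ v₁ and A v₂ = λ v₂ + v₁ (a Jordan chain of length 2). If y ∈ ℤ^n has finite orbit under the group generated by A^T, then v₁ · y = 0. -/

import Mathlib

/-- Let A ∈ GL_n(ℤ), λ an eigenvalue with |λ| = 1, and v₁, v₂ ∈ ℂ^n a Jordan chain of
length 2: A v₁ = λ v₁ and A v₂ = λ v₂ + v₁. If y ∈ ℤ^n has finite orbit under the group
generated by Aᵀ, then v₁ · y = 0. -/
theorem stmt6 (n : ℕ) (A u : (Matrix (Fin n) (Fin n) ℤ)ˣ)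
    (hu : (u : Matrix (Fin n) (Fin n) ℤ) = (A : Matrix (Fin n) (Fin n) ℤ).transpose)
    (l : ℂ) (hl : ‖l‖ = 1)
    (v₁ v₂ : Fin n → ℂ)
    (hv₁ : ((A : Matrix (Fin n) (Fin n) ℤ).map (Int.cast : ℤ → ℂ)).mulVec v₁ = l • v₁)
    (hv₂ : ((A : Matrix (Fin n) (Fin n) ℤ).map (Int.cast : ℤ → ℂ)).mulVec v₂ = l • v₂ + v₁)
    (y : Fin n → ℤ)
    (hfin : (Set.range fun ξ : ℤ =>
        ((u ^ ξ : (Matrix (Fin n) (Fin n) ℤ)ˣ) : Matrix (Fin n) (Fin n) ℤ).mulVec y).Finite) :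
    dotProduct v₁ (fun i => (y i : ℂ)) = 0 := by
  set M : Matrix (Fin n) (Fin n) ℂ := (A : Matrix (Fin n) (Fin n) ℤ).map (Int.cast : ℤ → ℂ) with hM
  set yc : Fin n → ℂ := fun i => (y i : ℂ) with hyc
  have hl0 : l ≠ 0 := by
    intro h; rw [h] at hl; simp at hl
  -- power formula
  have hpow : ∀ k : ℕ, (M ^ k).mulVec v₂ = l ^ k • v₂ + ((k : ℂ) * l ^ k * l⁻¹) • v₁ := by
    intro k
    induction k with
    | zero => simp
    | succ k ih =>
      rw [pow_succ', ← Matrix.mulVec_mulVec, ih, Matrix.mulVec_add, Matrix.mulVec_smul,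
        Matrix.mulVec_smul, hv₁, hv₂]
      have h1 : l ^ (k + 1) * l⁻¹ = l ^ k := by
        rw [pow_succ, mul_assoc, mul_inv_cancel₀ hl0, mul_one]
      have h2 : ((k : ℂ) + 1) * l ^ (k + 1) * l⁻¹ = (k : ℂ) * l ^ k + l ^ k := by
        rw [mul_assoc, h1]; ring
      push_cast
      rw [h2]
      match_scalars <;> field_simp <;> ring
  -- cast commutation
  have hcast : ∀ B : Matrix (Fin n) (Fin n) ℤ, ∀ z : Fin n → ℤ,
      (fun i => ((B.mulVec z) i : ℂ)) = (B.map (Int.cast : ℤ → ℂ)).mulVec (fun i => (z i : ℂ)) := by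
    intro B z
    funext i
    simp [Matrix.mulVec, dotProduct]
  -- powers of u
  have hupow : ∀ k : ℕ, ((u ^ (k : ℤ) : (Matrix (Fin n) (Fin n) ℤ)ˣ) : Matrix (Fin n) (Fin n) ℤ)
      = ((A : Matrix (Fin n) (Fin n) ℤ)).transpose ^ k := by
    intro k
    rw [zpow_natCast, Units.val_pow_eq_pow_val, hu]
  -- dot product identity
  have hdot : ∀ k : ℕ,
      dotProduct v₂
        (fun i => ((((u ^ (k : ℤ) : (Matrix (Fin n) (Fin n) ℤ)ˣ) : Matrix (Fin n) (Fin n) ℤ).mulVec y) i : ℂ))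
      = l ^ k * dotProduct v₂ yc + ((k : ℂ) * l ^ k * l⁻¹) * dotProduct v₁ yc := by
    intro k
    rw [hupow k, hcast]
    have hmappow : ∀ B : Matrix (Fin n) (Fin n) ℤ, (B ^ k).map (Int.cast : ℤ → ℂ)
        = (B.map (Int.cast : ℤ → ℂ)) ^ k := by
      intro B
      simpa [RingHom.mapMatrix_apply] using map_pow ((Int.castRingHom ℂ).mapMatrix) B k
    have hmap : ((A : Matrix (Fin n) (Fin n) ℤ).transpose ^ k).map (Int.cast : ℤ → ℂ)
        = (M ^ k).transpose := by
      rw [← Matrix.transpose_pow, Matrix.transpose_map, hmappow, Matrix.transpose_pow]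
    rw [hmap, Matrix.dotProduct_mulVec, Matrix.vecMul_transpose, hpow k,
      add_dotProduct, smul_dotProduct, smul_dotProduct,
      smul_eq_mul, smul_eq_mul]
  -- boundedness
  obtain ⟨C, hC⟩ : ∃ C : ℝ, ∀ k : ℕ, ‖(dotProduct v₂
        (fun i => ((((u ^ (k : ℤ) : (Matrix (Fin n) (Fin n) ℤ)ˣ) : Matrix (Fin n) (Fin n) ℤ).mulVec y) i : ℂ)))‖ ≤ C := by
    have hS : ((fun w : Fin n → ℤ => ‖(dotProduct v₂ (fun i => ((w i : ℂ))))‖) ''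
        (Set.range fun ξ : ℤ => ((u ^ ξ : (Matrix (Fin n) (Fin n) ℤ)ˣ) : Matrix (Fin n) (Fin n) ℤ).mulVec y)).Finite :=
      hfin.image _
    obtain ⟨C, hC⟩ := hS.bddAbove
    refine ⟨C, fun k => hC ⟨_, ⟨(k : ℤ), rfl⟩, rfl⟩⟩
  -- conclusion
  by_contra hb
  set b : ℂ := dotProduct v₁ yc with hbdef
  set a : ℂ := dotProduct v₂ yc with hadef
  have hbound : ∀ k : ℕ, (k : ℝ) * ‖b‖ - ‖a‖ ≤ C := by
    intro k
    have h1 := hC k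
    rw [hdot k] at h1
    have h2 : ‖((k : ℂ) * l ^ k * l⁻¹ * b)‖ - ‖(l ^ k * a)‖
        ≤ ‖(l ^ k * a + (k : ℂ) * l ^ k * l⁻¹ * b)‖ := by
      have h3 : ‖((k : ℂ) * l ^ k * l⁻¹ * b)‖
          ≤ ‖(l ^ k * a + (k : ℂ) * l ^ k * l⁻¹ * b)‖ + ‖(l ^ k * a)‖ := by
        calc ‖((k : ℂ) * l ^ k * l⁻¹ * b)‖
            = ‖((l ^ k * a + (k : ℂ) * l ^ k * l⁻¹ * b) + (-(l ^ k * a)))‖ := by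
              congr 1; ring
          _ ≤ ‖(l ^ k * a + (k : ℂ) * l ^ k * l⁻¹ * b)‖
              + ‖(-(l ^ k * a))‖ := norm_add_le _ _
          _ = ‖(l ^ k * a + (k : ℂ) * l ^ k * l⁻¹ * b)‖
              + ‖(l ^ k * a)‖ := by rw [norm_neg]
      linarith
    have habs1 : ‖((k : ℂ) * l ^ k * l⁻¹ * b)‖ = (k : ℝ) * ‖b‖ := by
      simp [map_mul, map_pow, hl, map_inv₀, Complex.norm_natCast]
    have habs2 : ‖(l ^ k * a)‖ = ‖a‖ := by
      simp [map_mul, map_pow, hl]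
    linarith [h2.trans h1]
  obtain ⟨k, hk⟩ := exists_nat_gt ((C + ‖a‖) / ‖b‖)
  have hbpos : 0 < ‖b‖ := by
    simpa [norm_pos_iff] using hb
  have : (C + ‖a‖) < (k : ℝ) * ‖b‖ := by
    rwa [div_lt_iff₀ hbpos] at hk
  linarith [hbound k]
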